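/- Let Ω := ℝ × (−1,1) ⊂ ℝ² and let u : ℝ² → [0,∞) be continuously differentiable, vanishing outside Ω, even in each variable (u(x₁,x₂) = u(−x₁,x₂) = u(x₁,−x₂)), and nonincreasing in each variable on the positive quadrant (if 0 ≤ x₁ ≤ X₁ and 0 ≤ x₂ ≤ X₂ < 1 then u(X₁,X₂) ≤ u(x₁,x₂)), with ∫_Ω |∇u(x)|² dx < ∞. Then for every (x₁,x₂) ∈ Ω with x₁ ≠ 0, u(x₁,x₂) ≤ (2/|x₁|)^{1/2} ( ∫_Ω |∇u(x)|² dx )^{1/2}. -/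

import Mathlib

open MeasureTheory Real

/-- The infinite planar strip `Ω = ℝ × (-1,1) ⊂ ℝ²`. -/
def strip : Set (EuclideanSpace ℝ (Fin 2)) := {x | x 1 ∈ Set.Ioo (-1 : ℝ) 1}

/-- The point `(a, b)` of `ℝ²` as an element of `EuclideanSpace ℝ (Fin 2)`. -/
noncomputable def pt (a b : ℝ) : EuclideanSpace ℝ (Fin 2) :=
  (WithLp.equiv 2 (Fin 2 → ℝ)).symm ![a, b]

/-- `ℝ × ℝ` is measurably equivalent to `EuclideanSpace ℝ (Fin 2)`. -/
noncomputable def stripEquiv : (ℝ × ℝ) ≃ᵐ EuclideanSpace ℝ (Fin 2) :=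
  MeasurableEquiv.finTwoArrow.symm.trans (MeasurableEquiv.toLp 2 (Fin 2 → ℝ))

lemma stripEquiv_apply (t s : ℝ) : stripEquiv (t, s) = pt t s := by
  ext i; fin_cases i <;> rfl

lemma stripEquiv_measurePreserving : MeasurePreserving stripEquiv volume volume :=
  ((EuclideanSpace.volume_preserving_symm_measurableEquiv_toLp (Fin 2)).symm).comp
    ((volume_preserving_finTwoArrow ℝ).symm)

/-- FTC + Cauchy–Schwarz along a vertical line. -/
lemma strip_line_bound (u : EuclideanSpace ℝ (Fin 2) → ℝ)
    (hu : ContDiff ℝ 1 u) (hpos : ∀ x, 0 ≤ u x)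
    (hzero : ∀ x, x ∉ strip → u x = 0)
    (t b : ℝ) (hb0 : 0 ≤ b) (hb1 : b < 1) :
    u (pt t b) ^ 2 ≤ 2 * ∫ s in Set.Ioo (-1:ℝ) 1, ‖fderiv ℝ u (pt t s)‖ ^ 2 := by
  set v : EuclideanSpace ℝ (Fin 2) := pt 0 1 with hv
  have hvnorm : ‖v‖ = 1 := by simp [hv, pt, EuclideanSpace.norm_eq, Fin.sum_univ_two]
  have hline : ∀ s : ℝ, pt t s = pt t 0 + s • v := by
    intro s; ext i; fin_cases i <;> simp [pt, hv]
  have hLderiv : ∀ s : ℝ, HasDerivAt (fun s : ℝ => pt t s) v s := by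
    intro s
    have : HasDerivAt (fun s : ℝ => pt t 0 + s • v) v s := by
      simpa using (((hasDerivAt_id s).smul_const v).const_add (pt t 0))
    simpa [← hline] using this
  set g' : ℝ → ℝ := fun s => fderiv ℝ u (pt t s) v with hg'
  have hgderiv : ∀ s : ℝ, HasDerivAt (fun s => u (pt t s)) (g' s) s := fun s =>
    ((hu.differentiable one_ne_zero (pt t s)).hasFDerivAt).comp_hasDerivAt s (hLderiv s)
  have hcontL : Continuous fun s : ℝ => pt t s := by
    have : (fun s : ℝ => pt t s) = fun s => pt t 0 + s • v := funext hline
    rw [this]; exact continuous_const.add (continuous_id.smul continuous_const)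
  have hcontF : Continuous fun s : ℝ => fderiv ℝ u (pt t s) :=
    (hu.continuous_fderiv one_ne_zero).comp hcontL
  have hcontg' : Continuous g' := hcontF.clm_apply continuous_const
  set h : ℝ → ℝ := fun s => ‖fderiv ℝ u (pt t s)‖ with hh
  have hconth : Continuous h := hcontF.norm
  have hg'le : ∀ s, |g' s| ≤ h s := by
    intro s
    calc |g' s| = ‖fderiv ℝ u (pt t s) v‖ := rfl
      _ ≤ ‖fderiv ℝ u (pt t s)‖ * ‖v‖ := ContinuousLinearMap.le_opNorm _ _
      _ = h s := by rw [hvnorm, mul_one]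
  have hftc : (∫ s in b..1, g' s) = u (pt t 1) - u (pt t b) :=
    intervalIntegral.integral_eq_sub_of_hasDerivAt (fun s _ => hgderiv s)
      (hcontg'.intervalIntegrable _ _)
  have hzero1 : u (pt t 1) = 0 := by
    apply hzero; simp [strip, pt]
  have hub : u (pt t b) = -∫ s in b..1, g' s := by
    rw [hftc, hzero1]; ring
  have hle1 : u (pt t b) ≤ ∫ s in b..1, h s := by
    rw [hub, ← intervalIntegral.integral_neg]
    apply intervalIntegral.integral_mono_on hb1.le
      ((hcontg'.neg).intervalIntegrable _ _) (hconth.intervalIntegrable _ _)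
    intro s _
    exact (neg_le_abs _).trans (hg'le s)
  have hIoo : (∫ s in b..1, h s) = ∫ s in Set.Ioo b 1, h s := by
    rw [intervalIntegral.integral_of_le hb1.le, integral_Ioc_eq_integral_Ioo]
  haveI : IsFiniteMeasure (volume.restrict (Set.Ioo b 1)) := by
    constructor
    simp [Real.volume_Ioo]
  obtain ⟨C, hC⟩ := (isCompact_Icc (α := ℝ) (a := b) (b := 1)).exists_bound_of_continuousOn
    hconth.continuousOn
  have hmem : MemLp h (ENNReal.ofReal 2) (volume.restrict (Set.Ioo b 1)) := by
    refine MemLp.of_bound (hconth.aestronglyMeasurable) C ?_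
    filter_upwards [ae_restrict_mem measurableSet_Ioo] with s hs
    exact hC s (Set.mem_Icc_of_Ioo hs)
  have hmem1 : MemLp (fun _ : ℝ => (1:ℝ)) (ENNReal.ofReal 2) (volume.restrict (Set.Ioo b 1)) :=
    memLp_const 1
  have hcs := integral_mul_le_Lp_mul_Lq_of_nonneg
    (Real.holderConjugate_iff_eq_conjExponent (by norm_num) |>.mpr (by norm_num))
    (Filter.Eventually.of_forall fun s => norm_nonneg _)
    (Filter.Eventually.of_forall fun _ => zero_le_one) hmem hmem1
  have hb2 : (0:ℝ) ≤ 1 - b := by linarith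
  have hint1 : (∫ _ in Set.Ioo b 1, (1:ℝ)) = 1 - b := by
    simp [Real.volume_Ioo, ENNReal.toReal_ofReal hb2, hb1.le]
  set I2 : ℝ := ∫ s in Set.Ioo b 1, h s ^ 2 with hI2
  set J : ℝ := ∫ s in Set.Ioo (-1:ℝ) 1, h s ^ 2 with hJ
  have hI2nonneg : 0 ≤ I2 := setIntegral_nonneg measurableSet_Ioo fun s _ => sq_nonneg _
  have hJnonneg : 0 ≤ J := setIntegral_nonneg measurableSet_Ioo fun s _ => sq_nonneg _
  have hcs' : (∫ s in Set.Ioo b 1, h s) ≤ Real.sqrt I2 * Real.sqrt (1 - b) := by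
    have h2 : ∀ x : ℝ, x ^ (2:ℝ) = x ^ (2:ℕ) := fun x => by
      rw [← Real.rpow_natCast x 2]; norm_num
    calc (∫ s in Set.Ioo b 1, h s) = ∫ s in Set.Ioo b 1, h s * 1 := by simp
      _ ≤ (∫ s in Set.Ioo b 1, h s ^ (2:ℝ)) ^ ((1:ℝ)/2) *
          (∫ s in Set.Ioo b 1, (1:ℝ) ^ (2:ℝ)) ^ ((1:ℝ)/2) := hcs
      _ = Real.sqrt I2 * Real.sqrt (1 - b) := by
          simp only [h2, Real.one_rpow, pow_one, hint1, ← Real.sqrt_eq_rpow]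
          rw [hI2]
          norm_num [hint1]
  have hintJ : IntegrableOn (fun s => h s ^ 2) (Set.Ioo (-1:ℝ) 1) :=
    ((hconth.pow 2).integrableOn_Icc).mono_set Set.Ioo_subset_Icc_self
  have hsub : I2 ≤ J := by
    apply setIntegral_mono_set hintJ
      (Filter.Eventually.of_forall fun s => sq_nonneg _)
    exact (Set.Ioo_subset_Ioo (by linarith) le_rfl).eventuallyLE
  have hfinal : u (pt t b) ≤ Real.sqrt I2 * Real.sqrt (1 - b) := by
    calc u (pt t b) ≤ ∫ s in b..1, h s := hle1
      _ = ∫ s in Set.Ioo b 1, h s := hIoo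
      _ ≤ _ := hcs'
  calc u (pt t b) ^ 2 ≤ (Real.sqrt I2 * Real.sqrt (1 - b)) ^ 2 :=
        pow_le_pow_left₀ (hpos _) hfinal 2
    _ = I2 * (1 - b) := by
        rw [mul_pow, Real.sq_sqrt hI2nonneg, Real.sq_sqrt hb2]
    _ ≤ J * 2 := by nlinarith
    _ = 2 * J := mul_comm _ _

/-- Decay estimate in the first variable: if `u ≥ 0` is `C¹`, vanishes outside the strip
`Ω = ℝ × (-1,1)`, is even in each variable and nonincreasing in each variable on the positive
quadrant, with finite Dirichlet energy, then for `x₁ ≠ 0`,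
`u(x₁,x₂) ≤ (2/|x₁|)^{1/2} (∫_Ω |∇u|²)^{1/2}`. -/
theorem strip_decay_first_variable (u : EuclideanSpace ℝ (Fin 2) → ℝ)
    (hu : ContDiff ℝ 1 u) (hpos : ∀ x, 0 ≤ u x)
    (hzero : ∀ x, x ∉ strip → u x = 0)
    (heven1 : ∀ a b : ℝ, u (pt (-a) b) = u (pt a b))
    (heven2 : ∀ a b : ℝ, u (pt a (-b)) = u (pt a b))
    (hmono : ∀ a A b B : ℝ, 0 ≤ a → a ≤ A → 0 ≤ b → b ≤ B → B < 1 →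
      u (pt A B) ≤ u (pt a b))
    (hE : IntegrableOn (fun x => ‖fderiv ℝ u x‖ ^ 2) strip) :
    ∀ a b : ℝ, a ≠ 0 → b ∈ Set.Ioo (-1 : ℝ) 1 →
      u (pt a b) ≤
        Real.sqrt (2 / |a|) * Real.sqrt (∫ x in strip, ‖fderiv ℝ u x‖ ^ 2) := by
  set f : EuclideanSpace ℝ (Fin 2) → ℝ := fun x => ‖fderiv ℝ u x‖ ^ 2 with hf
  set E : ℝ := ∫ x in strip, f x with hEdef
  set F : ℝ → ℝ := fun t => ∫ s in Set.Ioo (-1:ℝ) 1, f (pt t s) with hFdef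
  have hF_nonneg : ∀ t, 0 ≤ F t := fun t =>
    setIntegral_nonneg measurableSet_Ioo fun s _ => sq_nonneg _
  -- Fubini: transport the strip integral to an iterated integral
  have hmp := stripEquiv_measurePreserving
  have hemb := stripEquiv.measurableEmbedding
  have hpre : stripEquiv ⁻¹' strip = Set.univ ×ˢ Set.Ioo (-1:ℝ) 1 := by
    ext ⟨t, s⟩
    have : stripEquiv (t, s) 1 = s := by rw [stripEquiv_apply]; rfl
    simp [strip, Set.mem_preimage, this]
  have h1 : (∫ p in stripEquiv ⁻¹' strip, f (stripEquiv p)) = E :=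
    hmp.setIntegral_preimage_emb hemb f strip
  have h2 : IntegrableOn (f ∘ stripEquiv) (stripEquiv ⁻¹' strip) :=
    (hmp.integrableOn_comp_preimage hemb).mpr hE
  rw [hpre] at h1 h2
  have hres : (volume : Measure (ℝ × ℝ)).restrict (Set.univ ×ˢ Set.Ioo (-1:ℝ) 1)
      = (volume : Measure ℝ).prod (volume.restrict (Set.Ioo (-1:ℝ) 1)) := by
    rw [Measure.volume_eq_prod, ← Measure.prod_restrict, Measure.restrict_univ]
  have h2' : Integrable (f ∘ stripEquiv)
      ((volume : Measure ℝ).prod (volume.restrict (Set.Ioo (-1:ℝ) 1))) := by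
    rwa [IntegrableOn, hres] at h2
  have happ : ∀ t s : ℝ, f (stripEquiv (t, s)) = f (pt t s) := fun t s => by
    rw [stripEquiv_apply]
  have hEeq : (∫ t : ℝ, F t) = E := by
    have h1' : (∫ p, f (stripEquiv p)
        ∂((volume : Measure ℝ).prod (volume.restrict (Set.Ioo (-1:ℝ) 1)))) = E := by
      rw [← hres]; exact h1
    rw [← h1', MeasureTheory.integral_prod (fun p : ℝ × ℝ => f (stripEquiv p)) h2']
    exact (integral_congr_ae (Filter.Eventually.of_forall fun t =>
      integral_congr_ae (Filter.Eventually.of_forall fun s => happ t s))).symm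
  have hFint : Integrable F := by
    have := h2'.integral_prod_left
    apply this.congr
    exact Filter.Eventually.of_forall fun t =>
      integral_congr_ae (Filter.Eventually.of_forall fun s => happ t s)
  have hstripm : MeasurableSet strip :=
    measurableSet_Ioo.preimage (EuclideanSpace.proj (1 : Fin 2)).continuous.measurable
  have hE0 : 0 ≤ E := setIntegral_nonneg hstripm fun x _ => sq_nonneg _
  -- key inequality for positive coordinates
  have key : ∀ a b : ℝ, 0 < a → 0 ≤ b → b < 1 → a * u (pt a b) ^ 2 ≤ 2 * E := by
    intro a b ha hb0 hb1
    have hconst : (∫ _ in Set.Ioo (0:ℝ) a, u (pt a b) ^ 2) = a * u (pt a b) ^ 2 := by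
      simp [Real.volume_Ioo, ENNReal.toReal_ofReal ha.le, ha.le]
    have hstep1 : (∫ _ in Set.Ioo (0:ℝ) a, u (pt a b) ^ 2)
        ≤ ∫ t in Set.Ioo (0:ℝ) a, 2 * F t := by
      apply setIntegral_mono_on
      · exact integrableOn_const (by simp [Real.volume_Ioo])
      · exact (hFint.const_mul 2).integrableOn
      · exact measurableSet_Ioo
      · intro t ht
        have hmono' : u (pt a b) ≤ u (pt t b) := hmono t a b b ht.1.le ht.2.le hb0 le_rfl hb1
        calc u (pt a b) ^ 2 ≤ u (pt t b) ^ 2 := pow_le_pow_left₀ (hpos _) hmono' 2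
          _ ≤ 2 * F t := strip_line_bound u hu hpos hzero t b hb0 hb1
    have hstep2 : (∫ t in Set.Ioo (0:ℝ) a, 2 * F t) ≤ ∫ t : ℝ, 2 * F t :=
      setIntegral_le_integral (hFint.const_mul 2)
        (Filter.Eventually.of_forall fun t => mul_nonneg two_pos.le (hF_nonneg t))
    have hstep3 : (∫ t : ℝ, 2 * F t) = 2 * E := by
      simp only [← smul_eq_mul, integral_smul, hEeq]
    calc a * u (pt a b) ^ 2 = _ := hconst.symm
      _ ≤ _ := hstep1
      _ ≤ _ := hstep2
      _ = 2 * E := hstep3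
  -- reflections
  intro a b ha hb
  have ha0 : 0 < |a| := abs_pos.mpr ha
  have hb1 : |b| < 1 := abs_lt.mpr ⟨hb.1, hb.2⟩
  have hred1 : ∀ y : ℝ, u (pt |a| y) = u (pt a y) := by
    intro y
    rcases abs_choice a with h | h
    · rw [h]
    · rw [h, heven1]
  have hred2 : u (pt a |b|) = u (pt a b) := by
    rcases abs_choice b with h | h
    · rw [h]
    · rw [h, heven2]
  have hredeq : u (pt a b) = u (pt |a| |b|) := by rw [hred1, hred2]
  have hkey := key |a| |b| ha0 (abs_nonneg b) hb1
  rw [← hredeq] at hkey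
  rw [← Real.sqrt_mul (by positivity) E]
  rw [← Real.sqrt_sq (hpos (pt a b))]
  apply Real.sqrt_le_sqrt
  rw [div_mul_eq_mul_div, le_div_iff₀ ha0]
  linarith
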